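/- Let 0 < c < 1/2, a = 1/(2(1−c)), b = 1/(2c), and f₀ the piecewise linear map with f₀(x) = a·x on [0, 1−c]. With the metric d(x,y) = |h(x) − h(y)| (h(x) = log(2x) for x ≤ 1/2, h(x) = −log(2(1−x)) for x > 1/2): if x, y ∈ [1/2, 1−c], then d(f₀(x), f₀(y)) ≤ (1 − (2c/3)·d(x,y)) · d(x,y). -/

import Mathlib

noncomputable def h (x : ℝ) : ℝ :=
  if x ≤ 1/2 then Real.log (2*x) else -Real.log (2*(1-x))

noncomputable def d (x y : ℝ) : ℝ := |h x - h y|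

noncomputable def f₀ (c x : ℝ) : ℝ :=
  if x ≤ 1 - c then x / (2*(1-c)) else 1 - (1-x) / (2*c)

noncomputable def f₁ (c x : ℝ) : ℝ :=
  if x ≤ c then x / (2*c) else 1 - (1-x) / (2*(1-c))

lemma sinh_le_mul_cosh {s : ℝ} (hs : 0 ≤ s) : Real.sinh s ≤ s * Real.cosh s := by
  have hmono : MonotoneOn (fun t : ℝ => t * Real.cosh t - Real.sinh t) (Set.Ici 0) := by
    apply monotoneOn_of_deriv_nonneg (convex_Ici 0)
    · exact ((continuous_id.mul Real.continuous_cosh).sub Real.continuous_sinh).continuousOn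
    · intro t _
      exact (((differentiable_id.mul Real.differentiable_cosh).sub
        Real.differentiable_sinh) t).differentiableWithinAt
    · intro t ht
      rw [interior_Ici, Set.mem_Ioi] at ht
      have hd : deriv (fun t : ℝ => t * Real.cosh t - Real.sinh t) t = t * Real.sinh t := by
        rw [deriv_fun_sub ((differentiableAt_fun_id.fun_mul Real.differentiable_cosh.differentiableAt))
          Real.differentiable_sinh.differentiableAt,
          deriv_fun_mul differentiableAt_fun_id Real.differentiable_cosh.differentiableAt]
        simp [Real.deriv_cosh, Real.deriv_sinh]
      rw [hd]
      exact mul_nonneg ht.le (Real.sinh_nonneg_iff.mpr ht.le)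
  have := hmono (Set.self_mem_Ici) (Set.mem_Ici.mpr hs) hs
  simpa using this

set_option maxHeartbeats 1000000 in
lemma key_ineq (c p q : ℝ) (hc : 0 < c) (hcp : c ≤ p) (hpq : p ≤ q) (hq : q ≤ 1/2) :
    Real.log (1-p) - Real.log (1-q) ≤
      (1 - (2*c/3) * (Real.log q - Real.log p)) * (Real.log q - Real.log p) := by
  have hp0 : 0 < p := hc.trans_le hcp
  have hq0 : 0 < q := hp0.trans_le hpq
  have h1q : 0 < 1 - q := by linarith
  have h1p : 0 < 1 - p := by linarith
  set T := Real.log q - Real.log p with hTdef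
  have hT0 : 0 ≤ T := by
    have := Real.log_le_log hp0 hpq
    simp only [hTdef]; linarith
  set E := Real.exp (T/2) with hEdef
  have hE0 : 0 < E := Real.exp_pos _
  have hE1 : 1 ≤ E := Real.one_le_exp (by linarith)
  have hexpT : Real.exp T = q / p := by
    rw [hTdef, Real.exp_sub, Real.exp_log hq0, Real.exp_log hp0]
  have hEq : p * E^2 = q := by
    have hE2 : E^2 = Real.exp T := by
      rw [hEdef, sq, ← Real.exp_add]
      congr 1
      ring
    rw [hE2, hexpT]
    field_simp
  have hEinv : Real.exp (-(T/2)) = E⁻¹ := by rw [Real.exp_neg, hEdef]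
  have hsinh : Real.sinh (T/2) = (E - E⁻¹)/2 := by rw [Real.sinh_eq, hEinv, hEdef]
  have hcosh : Real.cosh (T/2) = (E + E⁻¹)/2 := by rw [Real.cosh_eq, hEinv, hEdef]
  have hs1 : T ≤ E - E⁻¹ := by
    have := Real.self_le_sinh_iff.mpr (by linarith : (0:ℝ) ≤ T/2)
    rw [hsinh] at this; linarith
  have hs2 : E - E⁻¹ ≤ T/2 * (E + E⁻¹) := by
    have := sinh_le_mul_cosh (by linarith : (0:ℝ) ≤ T/2)
    rw [hsinh, hcosh] at this; linarith
  have hEE : E * E⁻¹ = 1 := mul_inv_cancel₀ hE0.ne'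
  -- Step 1 : T^2 ≤ (q-p)^2/(p*q)
  have hb1 : T^2 ≤ (q-p)^2/(p*q) := by
    have heq : (q-p)^2/(p*q) = (E - E⁻¹)^2 := by
      rw [← hEq]
      field_simp
    rw [heq]
    exact pow_le_pow_left₀ hT0 hs1 2
  -- Step 2 : 2(q-p)/(q+p) ≤ T
  have hb2 : 2*(q-p)/(q+p) ≤ T := by
    have hsum : (0:ℝ) < q + p := by linarith
    rw [div_le_iff₀ hsum]
    have heq2 : 2*(q-p) = 2*p*E*(E - E⁻¹) := by
      rw [← hEq]; field_simp
    have heq3 : q + p = p*E*(E + E⁻¹) := by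
      rw [← hEq]; field_simp
    rw [heq2, heq3]
    have hpe : (0:ℝ) < p*E := by positivity
    nlinarith [hs2, hpe, mul_le_mul_of_nonneg_left hs2 hpe.le]
  -- Step 3 : log bound on the image side
  have hb3 : Real.log (1-p) - Real.log (1-q) ≤ (q-p)/(1-q) := by
    have hpos : (0:ℝ) < (1-p)/(1-q) := by positivity
    have := Real.log_le_sub_one_of_pos hpos
    rw [Real.log_div h1p.ne' h1q.ne'] at this
    have heq : (1-p)/(1-q) - 1 = (q-p)/(1-q) := by field_simp; ring
    linarith [heq ▸ this]
  -- Step 4 : polynomial inequality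
  have hpoly : (q-p)/(1-q) + (2/3)*((q-p)^2/q) ≤ 2*(q-p)/(q+p) := by
    have hsum : (0:ℝ) < q + p := by linarith
    have hden : (0:ℝ) < 3*q*(q+p)*(1-q) := by positivity
    rw [← sub_nonneg]
    have heq : 2*(q-p)/(q+p) - ((q-p)/(1-q) + (2/3)*((q-p)^2/q))
        = ((q-p)*(6*q*(1-q) - 3*q*(q+p) - 2*(q-p)*(q+p)*(1-q))) / (3*q*(q+p)*(1-q)) := by
      field_simp
      ring
    rw [heq]
    apply div_nonneg _ hden.le
    have hqp : 0 ≤ q - p := by linarith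
    -- 6q(1-q) - 3q(q+p) - 2(q-p)(q+p)(1-q) = 6q(1-2q) + (q-p)(q(1+2q) - 2(1-q)p)
    rcases le_or_gt (2*(1-q)*p) (q*(1+2*q)) with hcase | hcase
    · have h1 : 0 ≤ (q-p)*(q*(1+2*q) - 2*(1-q)*p) :=
        mul_nonneg hqp (by linarith)
      have h2 : 0 ≤ 6*q*(1-2*q) := by nlinarith
      nlinarith [h1, h2, mul_nonneg hqp hq0.le]
    · -- here 1 - 4q > 0 since 2(1-q)p > q(1+2q) and p ≤ q
      have hpos2 : 0 < 2*(1-q)*p - q*(1+2*q) := by linarith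
      have h4q : 2*(1-q)*p - q*(1+2*q) ≤ q*(1-4*q) := by nlinarith
      have hfac : (q-p)*(2*(1-q)*p - q*(1+2*q)) ≤ q*(q*(1-4*q)) :=
        mul_le_mul (by linarith) h4q hpos2.le hq0.le
      have hEnn : 0 ≤ 6*q*(1-q) - 3*q*(q+p) - 2*(q-p)*(q+p)*(1-q) := by nlinarith [hfac, hq0, hq]
      exact mul_nonneg hqp hEnn
  -- Step 5 : coefficient comparison
  have hfrac : (2*c/3)*T^2 ≤ (2/3)*((q-p)^2/q) := by
    have h1 : (2*c/3)*T^2 ≤ (2*c/3)*((q-p)^2/(p*q)) := by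
      apply mul_le_mul_of_nonneg_left hb1 (by linarith)
    have h2 : (2*c/3)*((q-p)^2/(p*q)) ≤ (2/3)*((q-p)^2/q) := by
      have heq : (2/3)*((q-p)^2/q) - (2*c/3)*((q-p)^2/(p*q)) = (2/3)*((q-p)^2/q)*((p-c)/p) := by
        field_simp
      have hnn : 0 ≤ (2/3)*((q-p)^2/q)*((p-c)/p) :=
        mul_nonneg (mul_nonneg (by norm_num) (div_nonneg (sq_nonneg _) hq0.le))
          (div_nonneg (by linarith) hp0.le)
      linarith [heq ▸ hnn]
    linarith
  have hexpand : (1 - (2*c/3) * T) * T = T - (2*c/3)*T^2 := by ring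
  rw [hexpand]
  linarith

lemma h_on_right {x : ℝ} (hx : 1/2 ≤ x) (hx1 : x < 1) :
    h x = -Real.log 2 - Real.log (1-x) := by
  unfold h
  rcases le_or_gt x (1/2) with hle | hgt
  · have hx2 : x = 1/2 := le_antisymm hle hx
    subst hx2
    norm_num
    rw [one_div, Real.log_inv]
    ring
  · rw [if_neg (not_le.mpr hgt)]
    rw [Real.log_mul (by norm_num) (by linarith)]
    ring

lemma h_f₀ {c x : ℝ} (hc0 : 0 < c) (hc1 : c < 1/2) (hx : x ∈ Set.Icc (1/2) (1-c)) :
    h (f₀ c x) = Real.log x - Real.log (1-c) := by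
  obtain ⟨hx1, hx2⟩ := hx
  have h1c : (0:ℝ) < 1 - c := by linarith
  have hx0 : (0:ℝ) < x := by linarith
  have hf : f₀ c x = x / (2*(1-c)) := if_pos hx2
  have hle : x / (2*(1-c)) ≤ 1/2 := by
    rw [div_le_iff₀ (by linarith)]; linarith
  rw [hf]
  unfold h
  rw [if_pos hle]
  have heq : 2 * (x / (2*(1-c))) = x / (1-c) := by
    field_simp
  rw [heq, Real.log_div hx0.ne' h1c.ne']

lemma stmt_ordered (c : ℝ) (hc0 : 0 < c) (hc1 : c < 1/2)
    (x y : ℝ) (hx : x ∈ Set.Icc (1/2) (1-c)) (hy : y ∈ Set.Icc (1/2) (1-c))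
    (hxy : x ≤ y) :
    d (f₀ c x) (f₀ c y) ≤ (1 - (2*c/3) * d x y) * d x y := by
  obtain ⟨hx1, hx2⟩ := hx
  obtain ⟨hy1, hy2⟩ := hy
  have hx0 : (0:ℝ) < x := by linarith
  have hy0 : (0:ℝ) < y := by linarith
  have hxlt1 : x < 1 := by linarith
  have hylt1 : y < 1 := by linarith
  have hd1 : d (f₀ c x) (f₀ c y) = Real.log y - Real.log x := by
    unfold d
    rw [h_f₀ hc0 hc1 ⟨hx1, hx2⟩, h_f₀ hc0 hc1 ⟨hy1, hy2⟩]
    rw [abs_sub_comm, abs_of_nonneg]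
    · ring
    · have := Real.log_le_log hx0 hxy
      linarith
  have hd2 : d x y = Real.log (1-x) - Real.log (1-y) := by
    unfold d
    rw [h_on_right hx1 hxlt1, h_on_right hy1 hylt1]
    rw [abs_of_nonpos]
    · ring
    · have := Real.log_le_log (by linarith : (0:ℝ) < 1 - y) (by linarith : 1 - y ≤ 1 - x)
      linarith
  rw [hd1, hd2]
  have := key_ineq c (1-y) (1-x) hc0 (by linarith) (by linarith) (by linarith)
  have e1 : (1:ℝ) - (1-y) = y := by ring
  have e2 : (1:ℝ) - (1-x) = x := by ring
  rw [e1, e2] at this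
  exact this

theorem stmt_9 (c : ℝ) (hc0 : 0 < c) (hc1 : c < 1/2)
    (x y : ℝ) (hx : x ∈ Set.Icc (1/2) (1-c)) (hy : y ∈ Set.Icc (1/2) (1-c)) :
    d (f₀ c x) (f₀ c y) ≤ (1 - (2*c/3) * d x y) * d x y := by
  rcases le_total x y with hxy | hxy
  · exact stmt_ordered c hc0 hc1 x y hx hy hxy
  · have hsym1 : d (f₀ c x) (f₀ c y) = d (f₀ c y) (f₀ c x) := by
      unfold d; exact abs_sub_comm _ _
    have hsym2 : d x y = d y x := by
      unfold d; exact abs_sub_comm _ _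
    rw [hsym1, hsym2]
    exact stmt_ordered c hc0 hc1 y x hy hx hxy
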